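/- Let q = 2^m, n odd, and a, b ∈ F_q with a ≠ 0. For any Z ∈ F_{q^n} with Tr(Z) = 0, the element z = Σ_{j=0}^{m-1} (b/a)^{-(2^{j+1}-1)} · Σ_{k=0}^{(n-1)/2} (Z/a)^{2^{2km+j}} satisfies a·z² + b·z = Z, provided b ≠ 0. -/

import Mathlib

open Finset

lemma aux_sum_range_two_mul {M : Type*} [AddCommMonoid M] (g : ℕ → M) (N : ℕ) :
    ∑ i ∈ range (2 * N), g i = ∑ k ∈ range N, g (2 * k) + ∑ k ∈ range N, g (2 * k + 1) := by
  induction N with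
  | zero => simp
  | succ N ih =>
    have h2 : 2 * (N + 1) = (2 * N + 1) + 1 := by omega
    rw [h2, sum_range_succ, sum_range_succ, sum_range_succ, sum_range_succ, ih]
    abel

lemma aux_telescope {R : Type*} [CommRing R] (h2 : (2 : R) = 0) (g : ℕ → R) (m : ℕ) :
    ∑ j ∈ range m, g (j + 1) + ∑ j ∈ range m, g j = g m + g 0 := by
  have h1 := Finset.sum_range_succ' g m
  have h2' := Finset.sum_range_succ g m
  linear_combination (-1 : R) * h1 - h2' + (∑ i ∈ range (m + 1), g i - g 0 - g m) * h2

lemma aux_trace_eq {F K : Type*} [Field F] [Fintype F] [Field K] [Fintype K] [Algebra F K]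
    [CharP K 2] (m n : ℕ) (hm : 0 < m) (hn0 : 0 < n)
    (hF : Fintype.card F = 2 ^ m) (hK : Module.finrank F K = n) (x : K) :
    algebraMap F K (Algebra.trace F K x) = ∑ i ∈ range n, x ^ (2 ^ m) ^ i := by
  classical
  have : FiniteDimensional F K := FiniteDimensional.of_finrank_pos (hK ▸ hn0)
  have hcardK : Fintype.card K = 2 ^ (m * n) := by
    rw [Module.card_eq_pow_finrank (K := F) (V := K), hF, hK, ← pow_mul]
  -- the Frobenius as an algebra automorphism
  let φ0 : K →ₐ[F] K :=
    { toFun := fun y => y ^ 2 ^ m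
      map_one' := one_pow _
      map_mul' := fun y z => mul_pow y z _
      map_zero' := zero_pow (by positivity)
      map_add' := fun y z => add_pow_char_pow y z 2 m
      commutes' := fun r => by
        show algebraMap F K r ^ 2 ^ m = algebraMap F K r
        rw [← map_pow, ← hF, FiniteField.pow_card] }
  let φ : K ≃ₐ[F] K := AlgEquiv.ofBijective φ0
    (Finite.injective_iff_bijective.mp φ0.toRingHom.injective)
  have hφ : ∀ y : K, φ y = y ^ 2 ^ m := fun y => rfl
  have hφpow : ∀ (i : ℕ) (y : K), (φ ^ i) y = y ^ (2 ^ m) ^ i := by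
    intro i
    induction i with
    | zero => intro y; simp
    | succ i ih =>
      intro y
      rw [pow_succ', AlgEquiv.mul_apply, ih, hφ, ← pow_mul, ← pow_succ]
  have key : ∀ i j : ℕ, i < j → j < n → φ ^ i ≠ φ ^ j := by
    intro i j hlt hj hij
    have hd : φ ^ (j - i) = 1 := by
      have : φ ^ i * φ ^ (j - i) = φ ^ i * 1 := by
        rw [mul_one, ← pow_add]
        rw [show i + (j - i) = j by omega]
        exact hij.symm
      exact mul_left_cancel this
    set d := j - i with hdd
    have hd0 : 0 < d := by omega
    have hdn : d < n := by omega
    have hfix : ∀ y : K, y ^ (2 ^ m) ^ d = y := by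
      intro y
      have := congrArg (fun (σ : K ≃ₐ[F] K) => σ y) hd
      simpa [hφpow] using this
    have hu : ∀ u : Kˣ, u ^ ((2 ^ m) ^ d - 1) = 1 := by
      intro u
      have h1 : (u : K) ^ ((2 ^ m) ^ d - 1) * (u : K) = (u : K) := by
        rw [← pow_succ]
        rw [show (2 ^ m) ^ d - 1 + 1 = (2 ^ m) ^ d by
          have h3 : 0 < ((2 : ℕ) ^ m) ^ d := by positivity
          omega]
        exact hfix u
      have h2 : (u : K) ^ ((2 ^ m) ^ d - 1) = 1 :=
        mul_right_cancel₀ u.ne_zero (by rw [h1, one_mul])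
      ext
      simpa using h2
    have hdvd : Fintype.card K - 1 ∣ (2 ^ m) ^ d - 1 :=
      (FiniteField.forall_pow_eq_one_iff (K := K) ((2 ^ m) ^ d - 1)).mp hu
    have hlt2 : (2 : ℕ) ^ (m * d) < 2 ^ (m * n) := by
      apply Nat.pow_lt_pow_right (by norm_num)
      exact (Nat.mul_lt_mul_left hm).mpr hdn
    have hpos : 0 < (2 : ℕ) ^ (m * d) - 1 := by
      have h1 : 1 < (2 : ℕ) ^ (m * d) := Nat.one_lt_two_pow_iff.mpr (by positivity)
      omega
    have hle := Nat.le_of_dvd (by rw [← pow_mul]; exact hpos) hdvd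
    rw [hcardK, ← pow_mul] at hle
    have h2mn : 1 ≤ (2:ℕ) ^ (m * n) := Nat.one_le_two_pow
    omega
  have hinj : Set.InjOn (fun i => φ ^ i) (range n) := by
    intro i hi j hj hij
    simp only [mem_coe, mem_range] at hi hj
    rcases lt_trichotomy i j with h | h | h
    · exact absurd hij (key i j h hj)
    · exact h
    · exact absurd hij.symm (key j i h hi)
  have hcardGal : Fintype.card (K ≃ₐ[F] K) = n := by
    rw [← Nat.card_eq_fintype_card, IsGalois.card_aut_eq_finrank, hK]
  have himg : (range n).image (fun i => φ ^ i) = Finset.univ := by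
    apply Finset.eq_univ_of_card
    rw [Finset.card_image_of_injOn hinj, card_range, hcardGal]
  rw [trace_eq_sum_automorphisms, ← himg, Finset.sum_image (fun i hi j hj h => hinj hi hj h)]
  exact Finset.sum_congr rfl fun i _ => hφpow i x

theorem stmt15 {F K : Type*} [Field F] [Fintype F] [Field K] [Algebra F K]
    (m n : ℕ) (hm : 0 < m) (hn : Odd n)
    (hF : Fintype.card F = 2 ^ m) (hK : Module.finrank F K = n)
    (a b : F) (ha : a ≠ 0) (hb : b ≠ 0)
    (Z : K) (hZ : Algebra.trace F K Z = 0) :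
    algebraMap F K a *
        (∑ j ∈ Finset.range m,
            ((algebraMap F K b / algebraMap F K a)⁻¹) ^ (2 ^ (j + 1) - 1) *
              ∑ k ∈ Finset.range ((n - 1) / 2 + 1),
                (Z / algebraMap F K a) ^ 2 ^ (2 * k * m + j)) ^ 2 +
      algebraMap F K b *
        (∑ j ∈ Finset.range m,
            ((algebraMap F K b / algebraMap F K a)⁻¹) ^ (2 ^ (j + 1) - 1) *
              ∑ k ∈ Finset.range ((n - 1) / 2 + 1),
                (Z / algebraMap F K a) ^ 2 ^ (2 * k * m + j)) = Z := by
  classical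
  have hn0 : 0 < n := hn.pos
  have : FiniteDimensional F K := FiniteDimensional.of_finrank_pos (hK ▸ hn0)
  have : Finite K := Module.finite_of_finite F
  cases nonempty_fintype K
  -- characteristic 2
  obtain ⟨p, hp⟩ := CharP.exists F
  haveI := hp
  obtain ⟨k, hprime, hcard⟩ := FiniteField.card F p
  have hp2 : p = 2 := by
    have hdvd : p ∣ 2 ^ m := by
      rw [← hF, hcard]
      exact dvd_pow_self p (by exact_mod_cast k.2.ne')
    exact (Nat.prime_dvd_prime_iff_eq hprime Nat.prime_two).mp
      (hprime.dvd_of_dvd_pow hdvd)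
  subst hp2
  haveI : CharP K 2 := charP_of_injective_algebraMap
    (FaithfulSMul.algebraMap_injective F K) 2
  have h2K : (2 : K) = 0 := by
    have := CharP.cast_eq_zero K 2
    exact_mod_cast this
  have hcardK : Fintype.card K = 2 ^ (m * n) := by
    rw [Module.card_eq_pow_finrank (K := F) (V := K), hF, hK, ← pow_mul]
  have hA : algebraMap F K a ≠ 0 := fun h =>
    ha (FaithfulSMul.algebraMap_injective F K (by rw [h, map_zero]))
  have hB : algebraMap F K b ≠ 0 := fun h =>
    hb (FaithfulSMul.algebraMap_injective F K (by rw [h, map_zero]))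
  set A := algebraMap F K a with hAdef
  set B := algebraMap F K b with hBdef
  set W := Z / A with hWdef
  set N := (n - 1) / 2 + 1 with hNdef
  set S : ℕ → K := fun j => ∑ k ∈ range N, W ^ 2 ^ (2 * k * m + j) with hSdef
  set z := ∑ j ∈ range m, (B / A)⁻¹ ^ (2 ^ (j + 1) - 1) * ∑ k ∈ range N, W ^ 2 ^ (2 * k * m + j)
    with hzdef
  -- it suffices to prove the normalized equation
  suffices hmain : z ^ 2 + (B / A) * z = W by
    rw [hWdef] at hmain
    field_simp at hmain
    linear_combination hmain
  have hcne : (B / A) ≠ 0 := div_ne_zero hB hA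
  set g : ℕ → K := fun j => (B / A)⁻¹ ^ (2 ^ (j + 1) - 2) * S j with hgdef
  have hz2 : z ^ 2 = ∑ j ∈ range m, g (j + 1) := by
    rw [hzdef, sum_pow_char]
    refine Finset.sum_congr rfl fun j hj => ?_
    rw [hgdef]
    show ((B / A)⁻¹ ^ (2 ^ (j + 1) - 1) * S j) ^ 2 = _
    rw [mul_pow, ← pow_mul]
    congr 1
    · congr 1
      have h1 : 1 ≤ (2:ℕ) ^ (j + 1) := Nat.one_le_two_pow
      have h2 : (2:ℕ) ^ (j + 1 + 1) = 2 * 2 ^ (j + 1) := by ring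
      omega
    · rw [hSdef]
      simp only
      rw [sum_pow_char]
      refine Finset.sum_congr rfl fun t ht => ?_
      rw [← pow_mul, ← pow_succ, add_assoc]
  have hcz : (B / A) * z = ∑ j ∈ range m, g j := by
    rw [hzdef, mul_sum]
    refine Finset.sum_congr rfl fun j hj => ?_
    rw [hgdef]
    show _ = (B / A)⁻¹ ^ (2 ^ (j + 1) - 2) * S j
    rw [hSdef]
    simp only
    have he : (2:ℕ) ^ (j + 1) - 1 = (2 ^ (j + 1) - 2) + 1 := by
      have h1 : 1 ≤ (2:ℕ) ^ j := Nat.one_le_two_pow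
      have h2 : (2:ℕ) ^ (j + 1) = 2 * 2 ^ j := by ring
      omega
    rw [he, pow_succ]
    have h0 : (B / A) * (B / A)⁻¹ = 1 := mul_inv_cancel₀ hcne
    linear_combination ((B / A)⁻¹ ^ (2 ^ (j + 1) - 2) *
      ∑ k ∈ range N, W ^ 2 ^ (2 * k * m + j)) * h0
  have htel : z ^ 2 + (B / A) * z = g m + g 0 := by
    rw [hz2, hcz]
    exact aux_telescope h2K g m
  rw [htel]
  -- now compute g m + g 0
  have hg0 : g 0 = S 0 := by
    show (B / A)⁻¹ ^ (2 ^ (0 + 1) - 2) * S 0 = S 0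
    norm_num
  have hgm : g m = S m := by
    have hxne : ((b / a)⁻¹ : F) ≠ 0 := inv_ne_zero (div_ne_zero hb ha)
    have hc1 : (B / A)⁻¹ ^ (2 ^ (m + 1) - 2) = 1 := by
      have h1 : (B / A)⁻¹ = algebraMap F K ((b / a)⁻¹) := by
        rw [map_inv₀, map_div₀]
      have h2 : (2:ℕ) ^ (m + 1) - 2 = (2 ^ m - 1) * 2 := by
        have h3 : 1 ≤ (2:ℕ) ^ m := Nat.one_le_two_pow
        have h4 : (2:ℕ) ^ (m + 1) = 2 ^ m * 2 := by ring
        omega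
      have h5 : ((b / a)⁻¹ : F) ^ (2 ^ m - 1) = 1 := by
        rw [← hF]
        exact FiniteField.pow_card_sub_one_eq_one _ hxne
      rw [h1, ← map_pow, h2, pow_mul, h5, one_pow, map_one]
    show (B / A)⁻¹ ^ (2 ^ (m + 1) - 2) * S m = S m
    rw [hc1, one_mul]
  rw [hg0, hgm]
  -- S m + S 0 = W
  have h2N : 2 * N = n + 1 := by
    obtain ⟨t, rfl⟩ := hn
    rw [hNdef]
    omega
  have hS0 : S 0 = ∑ k ∈ range N, (fun i => W ^ 2 ^ (i * m)) (2 * k) := by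
    refine Finset.sum_congr rfl fun t _ => ?_
    simp only
    norm_num
  have hSm : S m = ∑ k ∈ range N, (fun i => W ^ 2 ^ (i * m)) (2 * k + 1) := by
    refine Finset.sum_congr rfl fun t _ => ?_
    simp only
    congr 2
    ring
  have hsplit : S 0 + S m = ∑ i ∈ range (n + 1), W ^ 2 ^ (i * m) := by
    rw [← h2N, aux_sum_range_two_mul (fun i => W ^ 2 ^ (i * m)) N, hS0, hSm]
  have htrW : Algebra.trace F K W = 0 := by
    have hw : W = a⁻¹ • Z := by
      rw [hWdef, Algebra.smul_def, map_inv₀, div_eq_mul_inv, mul_comm]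
    rw [hw, LinearMap.map_smul, hZ, smul_zero]
  have hsum0 : ∑ i ∈ range n, W ^ 2 ^ (i * m) = 0 := by
    have := aux_trace_eq m n hm hn0 hF hK W
    rw [htrW, map_zero] at this
    have heq : ∑ i ∈ range n, W ^ 2 ^ (i * m) = ∑ i ∈ range n, W ^ (2 ^ m) ^ i :=
      Finset.sum_congr rfl fun i _ => by rw [← pow_mul, mul_comm]
    rw [heq, ← this]
  have hWn : W ^ 2 ^ (n * m) = W := by
    rw [mul_comm, ← hcardK]
    exact FiniteField.pow_card W
  rw [add_comm, hsplit, sum_range_succ, hsum0, zero_add, hWn]
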